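/- Let A be a G-Frobenius algebra over k that is k[G]-Galois over its untwisted sector A_e as a k[G]-comodule algebra, i.e. for every g ∈ G the k-linear span of the set of products {a·b : a ∈ A_{g⁻¹}, b ∈ A_g} equals A_e. Then A is special: for every g ∈ G there exists an element 1_g ∈ A_g such that A_e·1_g = A_g, and the map A_e → A_g given by a ↦ a·1_g is a k-linear isomorphism (so each twisted sector A_g is a cyclic A_e-module, free of rank one). -/

import Mathlib

/-- A `G`-Frobenius algebra over a field `k` of characteristic zero (Kaufmann):
a finite-dimensional `G`-graded `k`-vector space `A = ⊕_g A_g` (the grading given by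
submodules together with the projections onto them), with an associative bilinear
multiplication respecting the grading, unit `1 ∈ A_e`, a nondegenerate graded invariant
bilinear form `η`, a `G`-action `φ` by algebra automorphisms with
`φ_g(A_h) ⊆ A_{g h g⁻¹}`, and a character `χ : G → kˣ`, satisfying twisted
commutativity, projective self-invariance, projective invariance of the metric and the
projective trace axiom. -/
structure GFrobeniusAlgebra (G : Type) [Group G] [Fintype G]
    (k : Type) [Field k] [CharZero k]
    (A : Type) [AddCommGroup A] [Module k A] : Type where
  grading : G → Submodule k A
  proj : G → A →ₗ[k] A
  proj_mem : ∀ (g : G) (a : A), proj g a ∈ grading g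
  proj_of_mem : ∀ (g : G), ∀ a ∈ grading g, proj g a = a
  proj_of_ne : ∀ (g h : G), g ≠ h → ∀ a ∈ grading g, proj h a = 0
  sum_proj : ∀ a : A, (∑ g : G, proj g a) = a
  finiteDim : FiniteDimensional k A
  mul : A →ₗ[k] A →ₗ[k] A
  mul_assoc' : ∀ a b c : A, mul (mul a b) c = mul a (mul b c)
  one : A
  one_mem : one ∈ grading 1
  one_mul' : ∀ a : A, mul one a = a
  mul_one' : ∀ a : A, mul a one = a
  mul_mem : ∀ (g h : G), ∀ a ∈ grading g, ∀ b ∈ grading h, mul a b ∈ grading (g * h)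
  η : A →ₗ[k] A →ₗ[k] k
  η_nondeg : ∀ a : A, (∀ b : A, η a b = 0) → a = 0
  η_graded : ∀ (g h : G), g * h ≠ 1 → ∀ a ∈ grading g, ∀ b ∈ grading h, η a b = 0
  η_invariant : ∀ a b c : A, η a (mul b c) = η (mul a b) c
  φ : G → A →ₗ[k] A
  φ_one : φ 1 = LinearMap.id
  φ_mul : ∀ g h : G, φ (g * h) = φ g ∘ₗ φ h
  φ_algebra : ∀ (g : G) (a b : A), φ g (mul a b) = mul (φ g a) (φ g b)
  φ_unit : ∀ g : G, φ g one = one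
  φ_grading : ∀ (g h : G), ∀ a ∈ grading h, φ g a ∈ grading (g * h * g⁻¹)
  χ : G →* kˣ
  twisted_comm : ∀ (g : G), ∀ a ∈ grading g, ∀ b : A, mul a b = mul (φ g b) a
  self_invariance : ∀ (g : G), ∀ a ∈ grading g, φ g a = (((χ g)⁻¹ : kˣ) : k) • a
  metric_invariance : ∀ (g : G) (a b : A),
    η (φ g a) (φ g b) = ((((χ g)⁻¹ : kˣ) : k)) ^ 2 * η a b
  trace_axiom : ∀ (g h : G), ∀ c ∈ grading (g * h * g⁻¹ * h⁻¹),
    ((χ h : kˣ) : k) * LinearMap.trace k A (proj g ∘ₗ mul c ∘ₗ φ h ∘ₗ proj g)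
      = ((χ g⁻¹ : kˣ) : k) * LinearMap.trace k A (proj h ∘ₗ φ g⁻¹ ∘ₗ mul c ∘ₗ proj h)


/-- Subspace avoidance over an infinite field: if a submodule `p` is not contained in any
of finitely many submodules `q i`, then some element of `p` avoids all of them. -/
lemma subspace_avoidance {k V ι : Type*} [Field k] [Infinite k]
    [AddCommGroup V] [Module k V] (p : Submodule k V) (s : Finset ι)
    (q : ι → Submodule k V) (h : ∀ i ∈ s, ¬ p ≤ q i) :
    ∃ x ∈ p, ∀ i ∈ s, x ∉ q i := by
  classical
  induction s using Finset.induction_on with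
  | empty => exact ⟨0, p.zero_mem, by simp⟩
  | @insert i₀ s hi₀ ih =>
    obtain ⟨x, hxp, hx⟩ := ih (fun i hi => h i (Finset.mem_insert_of_mem hi))
    obtain ⟨y, hyp, hy⟩ := SetLike.not_le_iff_exists.mp (h i₀ (Finset.mem_insert_self _ _))
    have hfin : (⋃ i ∈ (insert i₀ s : Finset ι), {t : k | x + t • y ∈ q i}).Finite := by
      refine Set.Finite.biUnion (Finset.finite_toSet _) (fun i hi => ?_)
      refine Set.Subsingleton.finite (fun t ht t' ht' => ?_)
      by_contra hne
      have hyq : y ∈ q i := by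
        have hsub : (t - t') • y ∈ q i := by
          have := (q i).sub_mem ht ht'
          simpa [add_sub_add_left_eq_sub, ← sub_smul] using this
        have := (q i).smul_mem (t - t')⁻¹ hsub
        rwa [smul_smul, inv_mul_cancel₀ (sub_ne_zero.mpr hne), one_smul] at this
      rcases Finset.mem_insert.mp hi with rfl | hi'
      · exact hy hyq
      · apply hx i hi'
        have : (x + t • y) - t • y ∈ q i := (q i).sub_mem ht ((q i).smul_mem t hyq)
        simpa using this
    obtain ⟨t, ht⟩ := hfin.exists_notMem
    refine ⟨x + t • y, p.add_mem hxp (p.smul_mem t hyp), fun i hi hmem => ?_⟩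
    exact ht (Set.mem_biUnion hi hmem)

/-- In a finite-dimensional algebra with a commutative subalgebra `S`, if products of
elements of `M` and `N` land in `S` and their span contains `1`, then some single
product `c * d` is a unit of `S`. -/
lemma exists_unit_prod {k : Type} [Field k] [Infinite k] {A : Type} [Ring A] [Algebra k A]
    (S : Subalgebra k A) (hcomm : ∀ x y : ↥S, x * y = y * x)
    (hfin : FiniteDimensional k ↥S)
    (M N : Submodule k A) (hMN : ∀ a ∈ M, ∀ b ∈ N, a * b ∈ S)
    (hone : (1 : A) ∈ Submodule.span k {x | ∃ a ∈ M, ∃ b ∈ N, x = a * b}) :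
    ∃ c ∈ M, ∃ d ∈ N, ∃ v ∈ S, (c * d) * v = 1 ∧ v * (c * d) = 1 := by
  classical
  letI : CommRing ↥S := { (inferInstance : Ring ↥S) with mul_comm := hcomm }
  haveI := hfin
  haveI : IsArtinianRing ↥S := isArtinian_of_tower k inferInstance
  -- the lift of an ideal of S to a k-submodule of A
  let Ibar : Ideal ↥S → Submodule k A :=
    fun I => Submodule.map S.val.toLinearMap (Submodule.restrictScalars k I)
  have mem_Ibar : ∀ (I : Ideal ↥S) (x : ↥S), (x : A) ∈ Ibar I ↔ x ∈ I := by
    intro I x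
    constructor
    · rintro ⟨y, hy, hyx⟩
      have : y = x := Subtype.ext hyx
      rwa [← this]
    · intro hx; exact ⟨x, hx, rfl⟩
  have one_not_Ibar : ∀ (I : Ideal ↥S), I.IsMaximal → (1 : A) ∉ Ibar I := by
    intro I hI h1
    have : (1 : ↥S) ∈ I := (mem_Ibar I 1).mp h1
    exact hI.ne_top ((Ideal.eq_top_iff_one I).mpr this)
  let Mx : Finset (Ideal ↥S) := (IsArtinianRing.setOfPred_isMaximal_finite ↥S).toFinset
  have mem_Mx : ∀ I : Ideal ↥S, I ∈ Mx ↔ I.IsMaximal := by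
    intro I; exact Set.Finite.mem_toFinset _
  -- first avoidance : choose d ∈ N
  have hq1 : ∀ I ∈ Mx, ¬ N ≤ (⨅ c : ↥M, Submodule.comap (LinearMap.mulLeft k (c : A)) (Ibar I)) := by
    intro I hI hle
    apply one_not_Ibar I ((mem_Mx I).mp hI)
    have hsub : {x | ∃ a ∈ M, ∃ b ∈ N, x = a * b} ⊆ (Ibar I : Set A) := by
      rintro x ⟨a, ha, b, hb, rfl⟩
      have hb' := hle hb
      rw [Submodule.mem_iInf] at hb'
      exact Submodule.mem_comap.mp (hb' ⟨a, ha⟩)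
    exact Submodule.span_le.mpr hsub hone
  obtain ⟨d, hd, hd2⟩ := subspace_avoidance N Mx _ hq1
  have hd3 : ∀ I ∈ Mx, ∃ c ∈ M, c * d ∉ Ibar I := by
    intro I hI
    by_contra h'
    push_neg at h'
    apply hd2 I hI
    rw [Submodule.mem_iInf]
    intro c
    exact Submodule.mem_comap.mpr (h' c.1 c.2)
  -- second avoidance : choose c ∈ M
  have hq2 : ∀ I ∈ Mx, ¬ M ≤ Submodule.comap (LinearMap.mulRight k d) (Ibar I) := by
    intro I hI hle
    obtain ⟨c, hc, hcd⟩ := hd3 I hI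
    exact hcd (Submodule.mem_comap.mp (hle hc))
  obtain ⟨c, hc, hc2⟩ := subspace_avoidance M Mx _ hq2
  have hcd : ∀ I : Ideal ↥S, I.IsMaximal → c * d ∉ Ibar I := by
    intro I hI h
    exact hc2 I ((mem_Mx I).mpr hI) (Submodule.mem_comap.mpr h)
  -- c * d is a unit of S
  have huS : c * d ∈ S := hMN c hc d hd
  have hunit : IsUnit (⟨c * d, huS⟩ : ↥S) := by
    by_contra hnu
    obtain ⟨I, hIm, hmem⟩ := exists_max_ideal_of_mem_nonunits (mem_nonunits_iff.mpr hnu)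
    exact hcd I hIm ((mem_Ibar I ⟨c * d, huS⟩).mpr hmem)
  obtain ⟨w, hw⟩ := hunit
  refine ⟨c, hc, d, hd, (↑(w⁻¹) : ↥S), (↑(w⁻¹) : ↥S).2, ?_, ?_⟩
  · have : (⟨c * d, huS⟩ : ↥S) * (↑(w⁻¹) : ↥S) = 1 := by
      rw [← hw]; exact w.mul_inv
    exact congrArg Subtype.val this
  · have : (↑(w⁻¹) : ↥S) * (⟨c * d, huS⟩ : ↥S) = 1 := by
      rw [← hw]; exact w.inv_mul
    exact congrArg Subtype.val this

set_option synthInstance.maxHeartbeats 1000000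
set_option maxHeartbeats 1000000

/-- If a `G`-Frobenius algebra `A` is `k[G]`-Galois over its untwisted sector
`A_e` (the span of `A_{g⁻¹}·A_g` equals `A_e` for every `g`), then `A` is special: every
twisted sector `A_g` has a generator `1_g` with `A_e·1_g = A_g`, and the multiplication map
`A_e → A_g`, `a ↦ a·1_g`, is a `k`-linear isomorphism. -/
theorem galois_implies_special (G : Type) [Group G] [Fintype G]
    (k : Type) [Field k] [CharZero k] (A : Type) [AddCommGroup A] [Module k A]
    (F : GFrobeniusAlgebra G k A)
    (hGalois : ∀ g : G,
      Submodule.span k {x : A | ∃ a ∈ F.grading g⁻¹, ∃ b ∈ F.grading g, x = F.mul a b}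
        = F.grading 1) :
    ∀ g : G, ∃ og ∈ F.grading g,
      ((fun a => F.mul a og) '' (F.grading (1 : G) : Set A) = (F.grading g : Set A)) ∧
      Set.InjOn (fun a => F.mul a og) (F.grading (1 : G) : Set A) := by
  intro g
  haveI := F.finiteDim
  -- ring and algebra structure on A
  letI ringA : Ring A :=
    { (inferInstance : AddCommGroup A) with
      mul := fun a b => F.mul a b
      left_distrib := fun a b c => map_add (F.mul a) b c
      right_distrib := fun a b c => by
        show F.mul (a + b) c = F.mul a c + F.mul b c
        rw [map_add]; rfl
      zero_mul := fun a => by show F.mul 0 a = 0; rw [map_zero]; rfl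
      mul_zero := fun a => map_zero (F.mul a)
      mul_assoc := F.mul_assoc'
      one := F.one
      one_mul := F.one_mul'
      mul_one := F.mul_one' }
  letI algA : Algebra k A :=
    Algebra.ofModule
      (fun r x y => by show F.mul (r • x) y = r • F.mul x y; rw [map_smul]; rfl)
      (fun r x y => map_smul (F.mul x) r y)
  -- the untwisted sector as a commutative subalgebra
  let S : Subalgebra k A :=
    { carrier := (F.grading 1 : Set A)
      mul_mem' := fun {a b} ha hb => by
        have := F.mul_mem 1 1 a ha b hb
        exact (by simpa using this : F.mul a b ∈ F.grading 1)
      one_mem' := F.one_mem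
      add_mem' := fun {a b} ha hb => (F.grading 1).add_mem ha hb
      zero_mem' := (F.grading 1).zero_mem
      algebraMap_mem' := fun r => by
        rw [Algebra.algebraMap_eq_smul_one]
        exact (F.grading 1).smul_mem r F.one_mem }
  have hSmem : ∀ x : A, x ∈ S ↔ x ∈ F.grading 1 := fun x => Iff.rfl
  -- elements of the untwisted sector are central
  have central : ∀ w ∈ F.grading 1, ∀ x : A, F.mul w x = F.mul x w := by
    intro w hw x
    have := F.twisted_comm 1 w hw x
    rwa [F.φ_one] at this
  have hcomm : ∀ x y : ↥S, x * y = y * x := by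
    intro x y
    apply Subtype.ext
    show F.mul x.1 y.1 = F.mul y.1 x.1
    exact central x.1 x.2 y.1
  have hfinS : FiniteDimensional k ↥S :=
    FiniteDimensional.of_injective S.val.toLinearMap Subtype.val_injective
  have hMN : ∀ a ∈ F.grading g, ∀ b ∈ F.grading g⁻¹, a * b ∈ S := by
    intro a ha b hb
    have := F.mul_mem g g⁻¹ a ha b hb
    exact (by simpa using this : F.mul a b ∈ F.grading 1)
  have hone : (1 : A) ∈
      Submodule.span k {x : A | ∃ a ∈ F.grading g, ∃ b ∈ F.grading g⁻¹, x = a * b} := by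
    have hG := hGalois g⁻¹
    rw [inv_inv] at hG
    show F.one ∈ _
    rw [show {x : A | ∃ a ∈ F.grading g, ∃ b ∈ F.grading g⁻¹, x = a * b}
        = {x : A | ∃ a ∈ F.grading g, ∃ b ∈ F.grading g⁻¹, x = F.mul a b} from rfl, hG]
    exact F.one_mem
  obtain ⟨c, hc, d, hd, v, hvS, huv, hvu⟩ :=
    exists_unit_prod S hcomm hfinS (F.grading g) (F.grading g⁻¹) hMN hone
  have hv : v ∈ F.grading 1 := hvS
  -- translate to F.mul
  have huv' : F.mul (F.mul c d) v = F.one := huv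
  -- d' = v * d  satisfies  c * d' = 1
  set d' : A := F.mul v d with hd'def
  have hd' : d' ∈ F.grading g⁻¹ := by
    have := F.mul_mem 1 g⁻¹ v hv d hd
    simpa using this
  have hcd' : F.mul c d' = F.one := by
    calc F.mul c (F.mul v d) = F.mul (F.mul c v) d := (F.mul_assoc' c v d).symm
      _ = F.mul (F.mul v c) d := by rw [central v hv c]
      _ = F.mul v (F.mul c d) := F.mul_assoc' v c d
      _ = F.mul (F.mul c d) v := central v hv (F.mul c d)
      _ = F.one := huv'
  -- χ(g)-twisted relation  d' * c = χ(g) • 1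
  set χg : kˣ := F.χ g with hχg
  have hφ : F.φ g⁻¹ c = (χg : k) • c := by
    have h1 := F.self_invariance g c hc
    have h3 : F.φ (g⁻¹ * g) c = c := by rw [inv_mul_cancel, F.φ_one]; rfl
    rw [F.φ_mul] at h3
    have h2 : F.φ g⁻¹ (F.φ g c) = c := h3
    rw [h1, map_smul] at h2
    have := congrArg (fun x => (χg : k) • x) h2
    simpa [smul_smul, Units.mul_inv, χg] using this
  have hd'c : F.mul d' c = (χg : k) • F.one := by
    have htc := F.twisted_comm g⁻¹ d' hd' c
    rw [hφ] at htc
    rw [htc, map_smul, LinearMap.smul_apply, hcd']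
  -- conclude
  refine ⟨c, hc, ?_, ?_⟩
  · apply Set.Subset.antisymm
    · rintro x ⟨a, ha, rfl⟩
      have := F.mul_mem 1 g a ha c hc
      simpa using this
    · intro x hx
      refine ⟨((χg⁻¹ : kˣ) : k) • F.mul x d', ?_, ?_⟩
      · have : F.mul x d' ∈ F.grading 1 := by
          have := F.mul_mem g g⁻¹ x hx d' hd'
          simpa using this
        exact (F.grading 1).smul_mem _ this
      · show F.mul (((χg⁻¹ : kˣ) : k) • F.mul x d') c = x
        rw [map_smul, LinearMap.smul_apply, F.mul_assoc', hd'c, map_smul, F.mul_one',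
          smul_smul]
        norm_cast
        rw [inv_mul_cancel, Units.val_one, one_smul]
  · intro a ha a' ha' hEq
    have key : ∀ b : A, F.mul (F.mul b c) d' = b := fun b => by
      rw [F.mul_assoc', hcd', F.mul_one']
    calc a = F.mul (F.mul a c) d' := (key a).symm
      _ = F.mul (F.mul a' c) d' := by
          simp only at hEq
          rw [hEq]
      _ = a' := key a'
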